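/- arXiv:1708.07401 — 8 statements merged into one kernel-verified Lean document; each statement's English description precedes it below -/
import Mathlib

section
/- Let d and m be positive integers, and for each j ∈ {1,…,m} let S_j ⊆ {1,…,d} and let φ_j : ℤ^d → ℤ^{S_j} be the coordinate projection that extracts the coordinates indexed by S_j and forgets the others. Let s ∈ [0,1]^m satisfy, for every i ∈ {1,…,d}, ∑_{j : i ∈ S_j} s_j ≥ 1. Then for every finite subset E ⊆ ℤ^d, |E| ≤ ∏_{j=1}^{m} |φ_j(E)|^{s_j}, where |φ_j(E)| denotes the cardinality of the image of E under φ_j. -/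
open Finset

private lemma sum_rpow_le_rpow_sum' {κ : Type*} (T : Finset κ) (f : κ → ℝ)
    (hf : ∀ t ∈ T, 0 ≤ f t) {p : ℝ} (hp : 1 ≤ p) :
    ∑ t ∈ T, f t ^ p ≤ (∑ t ∈ T, f t) ^ p := by
  have hp0 : p ≠ 0 := by intro h; rw [h] at hp; linarith
  have hS : 0 ≤ ∑ t ∈ T, f t := Finset.sum_nonneg hf
  have hterm : ∀ t ∈ T, f t ^ p ≤ (∑ u ∈ T, f u) ^ (p - 1) * f t := by
    intro t ht
    rcases eq_or_lt_of_le (hf t ht) with h0 | h0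
    · rw [← h0, Real.zero_rpow hp0, mul_zero]
    · have hle : f t ≤ ∑ u ∈ T, f u := Finset.single_le_sum hf ht
      calc f t ^ p = f t ^ (p - 1) * f t := by
            rw [← Real.rpow_add_one h0.ne' (p - 1), sub_add_cancel]
        _ ≤ (∑ u ∈ T, f u) ^ (p - 1) * f t :=
            mul_le_mul_of_nonneg_right
              (Real.rpow_le_rpow h0.le hle (by linarith)) h0.le
  calc ∑ t ∈ T, f t ^ p ≤ ∑ t ∈ T, (∑ u ∈ T, f u) ^ (p - 1) * f t :=
        Finset.sum_le_sum hterm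
    _ = (∑ u ∈ T, f u) ^ (p - 1) * ∑ t ∈ T, f t := by rw [← Finset.mul_sum]
    _ = (∑ u ∈ T, f u) ^ p := by
        rcases eq_or_lt_of_le hS with h0 | h0
        · rw [← h0, mul_zero, Real.zero_rpow hp0]
        · rw [← Real.rpow_add_one h0.ne' (p - 1), sub_add_cancel]

private lemma holder_prod' {ι κ : Type*} (J : Finset ι) (T : Finset κ)
    (w : ι → ℝ) (b : ι → κ → ℝ)
    (hw : ∀ j ∈ J, 0 ≤ w j) (hw1 : ∑ j ∈ J, w j = 1)
    (hb : ∀ j ∈ J, ∀ t ∈ T, 0 < b j t) :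
    ∑ t ∈ T, ∏ j ∈ J, b j t ^ w j ≤ ∏ j ∈ J, (∑ t ∈ T, b j t) ^ w j := by
  rcases T.eq_empty_or_nonempty with rfl | hT
  · simp only [Finset.sum_empty]
    exact Finset.prod_nonneg fun j _ => Real.rpow_nonneg le_rfl _
  · set B : ι → ℝ := fun j => ∑ t ∈ T, b j t with hB
    have hBpos : ∀ j ∈ J, 0 < B j := fun j hj =>
      Finset.sum_pos (fun t ht => hb j hj t ht) hT
    have hPB : 0 ≤ ∏ j ∈ J, B j ^ w j :=
      Finset.prod_nonneg fun j hj => Real.rpow_nonneg (hBpos j hj).le _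
    have key : ∀ t ∈ T, ∏ j ∈ J, b j t ^ w j
        ≤ (∑ j ∈ J, w j * (b j t / B j)) * ∏ j ∈ J, B j ^ w j := by
      intro t ht
      have h1 : ∏ j ∈ J, b j t ^ w j
          = (∏ j ∈ J, (b j t / B j) ^ w j) * ∏ j ∈ J, B j ^ w j := by
        rw [← Finset.prod_mul_distrib]
        refine Finset.prod_congr rfl fun j hj => ?_
        rw [← Real.mul_rpow (div_nonneg (hb j hj t ht).le (hBpos j hj).le)
              (hBpos j hj).le, div_mul_cancel₀ _ (hBpos j hj).ne']
      rw [h1]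
      exact mul_le_mul_of_nonneg_right
        (Real.geom_mean_le_arith_mean_weighted J w _ hw hw1
          (fun j hj => div_nonneg (hb j hj t ht).le (hBpos j hj).le)) hPB
    calc ∑ t ∈ T, ∏ j ∈ J, b j t ^ w j
        ≤ ∑ t ∈ T, (∑ j ∈ J, w j * (b j t / B j)) * ∏ j ∈ J, B j ^ w j :=
          Finset.sum_le_sum key
      _ = (∑ t ∈ T, ∑ j ∈ J, w j * (b j t / B j)) * ∏ j ∈ J, B j ^ w j := by
          rw [← Finset.sum_mul]
      _ = ∏ j ∈ J, B j ^ w j := by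
          rw [Finset.sum_comm]
          have h2 : ∀ j ∈ J, ∑ t ∈ T, w j * (b j t / B j) = w j := by
            intro j hj
            rw [← Finset.mul_sum, ← Finset.sum_div, div_self (hBpos j hj).ne', mul_one]
          rw [Finset.sum_congr rfl h2, hw1, one_mul]

private lemma hbl_aux (d m : ℕ) (S : Fin m → Finset (Fin d)) (s : Fin m → ℝ)
    (hs0 : ∀ j, 0 ≤ s j)
    (A : Finset (Fin d))
    (E : Finset (Fin d → ℤ))
    (hcover : ∀ i ∈ A, 1 ≤ ∑ j ∈ Finset.univ.filter (fun j => i ∈ S j), s j)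
    (hconst : ∀ x ∈ E, ∀ y ∈ E, ∀ i, i ∉ A → x i = y i) :
    (E.card : ℝ) ≤ ∏ j : Fin m,
      ((E.image (fun x (i : S j) => x i.val)).card : ℝ) ^ s j := by
  classical
  induction A using Finset.induction generalizing E with
  | empty =>
    rcases E.eq_empty_or_nonempty with rfl | ⟨x, hx⟩
    · simp only [Finset.card_empty, Nat.cast_zero]
      exact Finset.prod_nonneg fun j _ => Real.rpow_nonneg (Nat.cast_nonneg _) _
    · have hE1 : E.card = 1 := by
        rw [Finset.card_eq_one]
        exact ⟨x, Finset.eq_singleton_iff_unique_mem.mpr ⟨hx, fun y hy =>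
          funext fun i => hconst y hy x hx i (Finset.notMem_empty i)⟩⟩
      rw [hE1, Nat.cast_one]
      have h1 : ∀ j : Fin m, (1 : ℝ) ≤ ((E.image (fun x (i : S j) => x i.val)).card : ℝ) ^ s j := by
        intro j
        refine Real.one_le_rpow ?_ (hs0 j)
        have h : 0 < (E.image (fun x (i : S j) => x i.val)).card :=
          Finset.card_pos.mpr ⟨_, Finset.mem_image_of_mem _ hx⟩
        exact_mod_cast h
      calc (1 : ℝ) = ∏ _j : Fin m, (1 : ℝ) := by simp
        _ ≤ _ := Finset.prod_le_prod (fun _ _ => zero_le_one) (fun j _ => h1 j)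
  | @insert a A haA IH =>
    rcases E.eq_empty_or_nonempty with rfl | hEne
    · simp only [Finset.card_empty, Nat.cast_zero, Finset.image_empty]
      exact Finset.prod_nonneg fun j _ => Real.rpow_nonneg le_rfl _
    set T : Finset ℤ := E.image (fun x => x a) with hTdef
    have hTne : T.Nonempty := hEne.image _
    set F : ℤ → Finset (Fin d → ℤ) := fun t => E.filter (fun x => x a = t) with hFdef
    have hcard : E.card = ∑ t ∈ T, (F t).card :=
      Finset.card_eq_sum_card_fiberwise (fun x hx => Finset.mem_image_of_mem _ hx)
    set c : Fin m → ℤ → ℝ := fun j t =>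
      (((F t).image (fun x (i : S j) => x i.val)).card : ℝ) with hcdef
    set C : Fin m → ℝ := fun j =>
      ((E.image (fun x (i : S j) => x i.val)).card : ℝ) with hCdef
    have hFne : ∀ t ∈ T, (F t).Nonempty := by
      intro t ht
      obtain ⟨x, hx, rfl⟩ := Finset.mem_image.mp ht
      exact ⟨x, Finset.mem_filter.mpr ⟨hx, rfl⟩⟩
    have hc1 : ∀ j, ∀ t ∈ T, (1 : ℝ) ≤ c j t := by
      intro j t ht
      have h : 0 < ((F t).image (fun x (i : S j) => x i.val)).card :=
        Finset.card_pos.mpr ((hFne t ht).image _)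
      simp only [hcdef]
      exact_mod_cast h
    have hc0 : ∀ j t, 0 ≤ c j t := fun j t => Nat.cast_nonneg _
    have hC0 : ∀ j, 0 ≤ C j := fun j => Nat.cast_nonneg _
    have hcC : ∀ j t, c j t ≤ C j := by
      intro j t
      simp only [hcdef, hCdef]
      exact_mod_cast Finset.card_le_card
        (Finset.image_subset_image (Finset.filter_subset _ _))
    -- apply IH on each slice
    have hIH : ∀ t ∈ T, ((F t).card : ℝ) ≤ ∏ j : Fin m, c j t ^ s j := by
      intro t _
      refine IH (F t) (fun i hi => hcover i (Finset.mem_insert_of_mem hi)) ?_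
      intro x hx y hy i hiA
      by_cases hia : i = a
      · subst hia
        rw [(Finset.mem_filter.mp hx).2, (Finset.mem_filter.mp hy).2]
      · refine hconst x (Finset.filter_subset _ _ hx) y (Finset.filter_subset _ _ hy) i ?_
        intro h
        rcases Finset.mem_insert.mp h with h | h
        exacts [hia h, hiA h]
    set J : Finset (Fin m) := Finset.univ.filter (fun j => a ∈ S j) with hJdef
    set σ : ℝ := ∑ j ∈ J, s j with hσdef
    have hσ1 : 1 ≤ σ := hcover a (Finset.mem_insert_self a A)
    have hσ0 : 0 < σ := lt_of_lt_of_le one_pos hσ1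
    set w : Fin m → ℝ := fun j => s j / σ with hwdef
    have hw0 : ∀ j ∈ J, 0 ≤ w j := fun j _ => div_nonneg (hs0 j) hσ0.le
    have hw1 : ∑ j ∈ J, w j = 1 := by
      rw [hwdef, ← Finset.sum_div, ← hσdef, div_self hσ0.ne']
    set b : Fin m → ℤ → ℝ := fun j t => c j t ^ σ with hbdef
    have hbpos : ∀ j ∈ J, ∀ t ∈ T, 0 < b j t := fun j _ t ht =>
      Real.rpow_pos_of_pos (lt_of_lt_of_le one_pos (hc1 j t ht)) _
    -- disjointness: slices have disjoint images when a ∈ S j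
    have hdisj : ∀ j ∈ J, ∑ t ∈ T, c j t ≤ C j := by
      intro j hj
      have haSj : a ∈ S j := (Finset.mem_filter.mp hj).2
      have hd : ∀ t₁ ∈ T, ∀ t₂ ∈ T, t₁ ≠ t₂ →
          Disjoint ((F t₁).image (fun x (i : S j) => x i.val))
                   ((F t₂).image (fun x (i : S j) => x i.val)) := by
        intro t₁ _ t₂ _ hne
        rw [Finset.disjoint_left]
        rintro u hu1 hu2
        obtain ⟨x, hx, rfl⟩ := Finset.mem_image.mp hu1
        obtain ⟨y, hy, hxy⟩ := Finset.mem_image.mp hu2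
        have h1 : x a = t₁ := (Finset.mem_filter.mp hx).2
        have h2 : y a = t₂ := (Finset.mem_filter.mp hy).2
        have := congrFun hxy ⟨a, haSj⟩
        exact hne (by rw [← h1, ← h2, this])
      have hbU : (T.biUnion (fun t => (F t).image (fun x (i : S j) => x i.val))).card
          = ∑ t ∈ T, ((F t).image (fun x (i : S j) => x i.val)).card :=
        Finset.card_biUnion hd
      have hsub : T.biUnion (fun t => (F t).image (fun x (i : S j) => x i.val))
          ⊆ E.image (fun x (i : S j) => x i.val) :=
        Finset.biUnion_subset.mpr fun t _ =>
          Finset.image_subset_image (Finset.filter_subset _ _)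
      have : ∑ t ∈ T, ((F t).image (fun x (i : S j) => x i.val)).card
          ≤ (E.image (fun x (i : S j) => x i.val)).card := by
        rw [← hbU]; exact Finset.card_le_card hsub
      calc ∑ t ∈ T, c j t
          = ((∑ t ∈ T, ((F t).image (fun x (i : S j) => x i.val)).card : ℕ) : ℝ) := by
            simp only [hcdef]; push_cast; ring_nf
        _ ≤ C j := by simp only [hCdef]; exact_mod_cast this
    -- the J-part bound via Hölder
    have hsw : ∀ j, σ * w j = s j := by
      intro j; rw [hwdef]; field_simp
    have hcw : ∀ j ∈ J, ∀ t, c j t ^ s j = b j t ^ w j := by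
      intro j _ t
      rw [hbdef, ← Real.rpow_mul (hc0 j t), hsw j]
    have hJpart : ∑ t ∈ T, ∏ j ∈ J, c j t ^ s j ≤ ∏ j ∈ J, C j ^ s j := by
      calc ∑ t ∈ T, ∏ j ∈ J, c j t ^ s j
          = ∑ t ∈ T, ∏ j ∈ J, b j t ^ w j := by
            refine Finset.sum_congr rfl fun t _ => Finset.prod_congr rfl fun j hj => hcw j hj t
        _ ≤ ∏ j ∈ J, (∑ t ∈ T, b j t) ^ w j := holder_prod' J T w b hw0 hw1 hbpos
        _ ≤ ∏ j ∈ J, C j ^ s j := by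
            refine Finset.prod_le_prod
              (fun j hj => Real.rpow_nonneg
                (Finset.sum_nonneg fun t ht => (hbpos j hj t ht).le) _) ?_
            intro j hj
            have h1 : ∑ t ∈ T, b j t ≤ (∑ t ∈ T, c j t) ^ σ :=
              sum_rpow_le_rpow_sum' T (c j) (fun t _ => hc0 j t) hσ1
            have h2 : (∑ t ∈ T, c j t) ^ σ ≤ C j ^ σ :=
              Real.rpow_le_rpow (Finset.sum_nonneg fun t _ => hc0 j t)
                (hdisj j hj) hσ0.le
            calc (∑ t ∈ T, b j t) ^ w j
                ≤ (C j ^ σ) ^ w j :=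
                  Real.rpow_le_rpow
                    (Finset.sum_nonneg fun t ht => (hbpos j hj t ht).le)
                    (le_trans h1 h2) (hw0 j hj)
              _ = C j ^ s j := by rw [← Real.rpow_mul (hC0 j), hsw j]
    -- combine
    set K : ℝ := ∏ j ∈ Finset.univ.filter (fun j => ¬ a ∈ S j), C j ^ s j with hKdef
    have hK0 : 0 ≤ K :=
      Finset.prod_nonneg fun j _ => Real.rpow_nonneg (hC0 j) _
    calc (E.card : ℝ) = ∑ t ∈ T, ((F t).card : ℝ) := by
          rw [hcard]; push_cast; ring_nf
      _ ≤ ∑ t ∈ T, ∏ j : Fin m, c j t ^ s j := Finset.sum_le_sum hIH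
      _ = ∑ t ∈ T, (∏ j ∈ J, c j t ^ s j) *
            (∏ j ∈ Finset.univ.filter (fun j => ¬ a ∈ S j), c j t ^ s j) := by
          refine Finset.sum_congr rfl fun t _ => ?_
          rw [Finset.prod_filter_mul_prod_filter_not]
      _ ≤ ∑ t ∈ T, (∏ j ∈ J, c j t ^ s j) * K := by
          refine Finset.sum_le_sum fun t ht => ?_
          refine mul_le_mul_of_nonneg_left ?_
            (Finset.prod_nonneg fun j _ => Real.rpow_nonneg (hc0 j t) _)
          exact Finset.prod_le_prod
            (fun j _ => Real.rpow_nonneg (hc0 j t) _)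
            (fun j _ => Real.rpow_le_rpow (hc0 j t) (hcC j t) (hs0 j))
      _ = (∑ t ∈ T, ∏ j ∈ J, c j t ^ s j) * K := by rw [← Finset.sum_mul]
      _ ≤ (∏ j ∈ J, C j ^ s j) * K := mul_le_mul_of_nonneg_right hJpart hK0
      _ = ∏ j : Fin m, C j ^ s j := by
          rw [hKdef, Finset.prod_filter_mul_prod_filter_not]


/-- Discrete Hölder–Brascamp–Lieb-type inequality (generalized Loomis–Whitney):
if the exponents `s j ∈ [0,1]` satisfy `∑_{j : i ∈ S j} s j ≥ 1` for every coordinate `i`,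
then `|E| ≤ ∏ j |φ_j(E)|^{s j}` for every finite `E ⊆ ℤ^d`, where `φ_j` extracts
the coordinates indexed by `S j`. -/
theorem stmt_0 (d m : ℕ) (hd : 0 < d) (hm : 0 < m)
    (S : Fin m → Finset (Fin d))
    (s : Fin m → ℝ)
    (hs0 : ∀ j, 0 ≤ s j) (hs1 : ∀ j, s j ≤ 1)
    (hcover : ∀ i : Fin d, 1 ≤ ∑ j ∈ Finset.univ.filter (fun j => i ∈ S j), s j)
    (E : Finset (Fin d → ℤ)) :
    (E.card : ℝ) ≤ ∏ j : Fin m,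
      ((E.image (fun x (i : S j) => x i.val)).card : ℝ) ^ s j := by
  exact hbl_aux d m S s hs0 Finset.univ E (fun i _ => hcover i)
    (fun x _ y _ i hi => absurd (Finset.mem_univ i) hi)
end

section
/- Let N ≥ 2 be an integer. Consider vectors s = (s_1,…,s_{N+1}) ∈ ℝ^{N+1} satisfying s ≥ 0, s_i + s_{N+1} ≥ 1 for every i ∈ {1,…,N}, and ∑_{i=1}^{N} s_i ≥ 1. Then every such s satisfies ∑_{i=1}^{N+1} s_i ≥ 2 − 1/N. Moreover, the vector s* with s*_i = 1/N for i ∈ {1,…,N} and s*_{N+1} = 1 − 1/N satisfies all the constraints and achieves ∑_{i=1}^{N+1} s*_i = 2 − 1/N; hence the minimum value of the linear program min ∑_i s_i over this feasible set equals 2 − 1/N. -/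
/-- The optimal point of the MTTKRP linear program. -/
noncomputable def sStar (N : ℕ) : Fin (N + 1) → ℝ :=
  fun j => if j = Fin.last N then 1 - 1 / (N : ℝ) else 1 / (N : ℝ)

lemma key (N : ℕ) (hN : 2 ≤ N) (s : Fin (N + 1) → ℝ)
    (h0 : ∀ j, 0 ≤ s j)
    (h1 : ∀ i : Fin N, 1 ≤ s i.castSucc + s (Fin.last N))
    (h2 : 1 ≤ ∑ i : Fin N, s i.castSucc) :
    2 - 1 / (N : ℝ) ≤ ∑ j, s j := by
  have hNpos : (0 : ℝ) < N := by positivity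
  rw [Fin.sum_univ_castSucc]
  by_cases hc : 1 - 1 / (N : ℝ) ≤ s (Fin.last N)
  · linarith
  · push_neg at hc
    have hsum : (N : ℝ) * (1 - s (Fin.last N)) ≤ ∑ i : Fin N, s i.castSucc := by
      have : ∑ i : Fin N, (1 - s (Fin.last N)) ≤ ∑ i : Fin N, s i.castSucc :=
        Finset.sum_le_sum fun i _ => by linarith [h1 i]
      simp only [Finset.sum_const, Finset.card_univ, Fintype.card_fin, nsmul_eq_mul] at this; exact this
    have hlast := h0 (Fin.last N)
    have hN2 : (2 : ℝ) ≤ N := by exact_mod_cast hN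
    have : (N : ℝ) - ((N : ℝ) - 1) * s (Fin.last N) ≤
        ∑ i : Fin N, s i.castSucc + s (Fin.last N) := by ring_nf; ring_nf at hsum; linarith
    have h3 : ((N : ℝ) - 1) * s (Fin.last N) ≤ ((N : ℝ) - 1) * (1 - 1 / N) := by
      apply mul_le_mul_of_nonneg_left (le_of_lt hc); linarith
    have h4 : ((N : ℝ) - 1) * (1 - 1 / N) = (N : ℝ) - 2 + 1 / N := by
      field_simp; ring
    linarith

/-- The linear program `min 1ᵀs` subject to `s ≥ 0`, `s_i + s_{N+1} ≥ 1` for `i ∈ [N]`,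
and `∑_{i∈[N]} s_i ≥ 1` has minimum value `2 - 1/N`, attained at
`s* = (1/N,…,1/N,1-1/N)`. -/
theorem stmt_1 (N : ℕ) (hN : 2 ≤ N) :
    (∀ s : Fin (N + 1) → ℝ,
        (∀ j, 0 ≤ s j) →
        (∀ i : Fin N, 1 ≤ s i.castSucc + s (Fin.last N)) →
        1 ≤ ∑ i : Fin N, s i.castSucc →
        2 - 1 / (N : ℝ) ≤ ∑ j, s j) ∧
    (∀ j, 0 ≤ sStar N j) ∧
    (∀ i : Fin N, 1 ≤ sStar N i.castSucc + sStar N (Fin.last N)) ∧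
    (1 ≤ ∑ i : Fin N, sStar N i.castSucc) ∧
    (∑ j, sStar N j = 2 - 1 / (N : ℝ)) ∧
    IsLeast {v : ℝ | ∃ s : Fin (N + 1) → ℝ,
        (∀ j, 0 ≤ s j) ∧
        (∀ i : Fin N, 1 ≤ s i.castSucc + s (Fin.last N)) ∧
        (1 ≤ ∑ i : Fin N, s i.castSucc) ∧
        v = ∑ j, s j}
      (2 - 1 / (N : ℝ)) := by
  have hNpos : (0 : ℝ) < N := by positivity
  have hN2 : (2 : ℝ) ≤ N := by exact_mod_cast hN
  have hinvN : 1 / (N : ℝ) ≤ 1 / 2 := by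
    apply div_le_div_of_nonneg_left <;> linarith
  have hcs : ∀ i : Fin N, sStar N i.castSucc = 1 / (N : ℝ) := by
    intro i
    simp [sStar, Fin.castSucc_lt_last i |>.ne]
  have hlast : sStar N (Fin.last N) = 1 - 1 / (N : ℝ) := by simp [sStar]
  have hsum1 : ∑ i : Fin N, sStar N i.castSucc = 1 := by
    rw [Finset.sum_congr rfl fun i _ => hcs i]
    simp
    field_simp
  have h0 : ∀ j, 0 ≤ sStar N j := by
    intro j
    unfold sStar
    split <;> [linarith; positivity]
  have h1 : ∀ i : Fin N, 1 ≤ sStar N i.castSucc + sStar N (Fin.last N) := by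
    intro i; rw [hcs i, hlast]; linarith
  have h2 : (1 : ℝ) ≤ ∑ i : Fin N, sStar N i.castSucc := hsum1.ge
  have htot : ∑ j, sStar N j = 2 - 1 / (N : ℝ) := by
    rw [Fin.sum_univ_castSucc, hsum1, hlast]; ring
  refine ⟨key N hN, h0, h1, h2, htot, ⟨⟨sStar N, h0, h1, h2, htot.symm⟩, ?_⟩⟩
  rintro v ⟨s, hs0, hs1, hs2, rfl⟩
  exact key N hN s hs0 hs1 hs2
end

section
/- Let N ≥ 2 be an integer and M > 0 a real number. If a finite set F ⊆ ℤ^{N+1} satisfies ∑_{j=1}^{N+1} |φ_j(F)| ≤ 3M, then |F| ≤ (3M)^{2−1/N} / N. -/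
/-- MTTKRP factor-matrix projection: `φ_j(i_1,…,i_N,r) = (i_j, r)` for `j ∈ [N]`. -/
def phiMat (N : ℕ) (j : Fin N) : (Fin (N + 1) → ℤ) → ℤ × ℤ :=
  fun x => (x j.castSucc, x (Fin.last N))

/-- MTTKRP tensor projection: `φ_{N+1}(i_1,…,i_N,r) = (i_1,…,i_N)`. -/
def phiTen (N : ℕ) : (Fin (N + 1) → ℤ) → (Fin N → ℤ) :=
  fun x i => x i.castSucc

/-- Discrete HBL-type bound for the MTTKRP projections:
`|F|^N ≤ |φ_{N+1}(F)|^{N-1} · ∏_j |φ_j(F)|`. -/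
lemma mttkrp_hbl (N : ℕ) (hN : 1 ≤ N) (F : Finset (Fin (N + 1) → ℤ)) :
    (F.card : ℝ) ^ N ≤
      ((F.image (phiTen N)).card : ℝ) ^ (N - 1)
        * ∏ j : Fin N, ((F.image (phiMat N j)).card : ℝ) := by
  classical
  set T : Finset (Fin N → ℤ) := F.image (phiTen N) with hT
  set ff : (Fin N → ℤ) → ℕ := fun t => (F.filter fun x => phiTen N x = t).card with hff
  set V : Fin N → Finset ℤ := fun j => T.image fun t => t j with hV
  set d : Fin N → ℤ → ℕ := fun j v =>
    ((F.image (phiMat N j)).filter fun p => p.1 = v).card with hd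
  have hcard : F.card = ∑ t ∈ T, ff t :=
    Finset.card_eq_sum_card_fiberwise (fun x hx => Finset.mem_image_of_mem _ hx)
  have hB : ∀ t ∈ T, ∀ j : Fin N, ff t ≤ d j (t j) := by
    intro t ht j
    apply Finset.card_le_card_of_injOn (phiMat N j)
    · intro x hx
      simp only [Finset.mem_coe, Finset.mem_filter] at hx ⊢
      refine ⟨Finset.mem_image_of_mem _ hx.1, ?_⟩
      rw [← hx.2]; rfl
    · intro x hx y hy hxy
      simp only [Finset.coe_filter, Set.mem_setOf_eq] at hx hy
      funext i
      refine Fin.lastCases ?_ ?_ i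
      · exact congrArg Prod.snd hxy
      · intro k
        have hxy' : phiTen N x = phiTen N y := hx.2.trans hy.2.symm
        exact congrFun hxy' k
  have hC : ∀ j : Fin N, (F.image (phiMat N j)).card = ∑ v ∈ V j, d j v := by
    intro j
    apply Finset.card_eq_sum_card_fiberwise
    intro p hp
    obtain ⟨x, hx, rfl⟩ := Finset.mem_image.1 hp
    exact Finset.mem_image.2 ⟨phiTen N x, Finset.mem_image_of_mem _ hx, rfl⟩
  have hE : ∑ t ∈ T, ∏ j : Fin N, d j (t j) ≤ ∏ j : Fin N, ∑ v ∈ V j, d j v := by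
    rw [Finset.prod_univ_sum]
    apply Finset.sum_le_sum_of_subset
    intro t ht
    rw [Fintype.mem_piFinset]
    exact fun j => Finset.mem_image_of_mem _ ht
  have hkey : ∑ t ∈ T, ff t ^ N ≤ ∏ j : Fin N, (F.image (phiMat N j)).card := by
    calc ∑ t ∈ T, ff t ^ N ≤ ∑ t ∈ T, ∏ j : Fin N, d j (t j) := by
          apply Finset.sum_le_sum
          intro t ht
          calc ff t ^ N = ∏ _j : Fin N, ff t := by
                simp [Finset.prod_const]
            _ ≤ ∏ j : Fin N, d j (t j) :=
                Finset.prod_le_prod' fun j _ => hB t ht j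
      _ ≤ ∏ j : Fin N, ∑ v ∈ V j, d j v := hE
      _ = ∏ j : Fin N, (F.image (phiMat N j)).card :=
          Finset.prod_congr rfl fun j _ => (hC j).symm
  -- Jensen (power mean) over the fibers
  have hN1 : N - 1 + 1 = N := Nat.sub_add_cancel hN
  have h1 : (F.card : ℝ) = ∑ t ∈ T, (ff t : ℝ) := by
    rw [hcard]; push_cast; rfl
  calc (F.card : ℝ) ^ N = (∑ t ∈ T, (ff t : ℝ)) ^ (N - 1 + 1) := by rw [h1, hN1]
    _ ≤ (T.card : ℝ) ^ (N - 1) * ∑ t ∈ T, (ff t : ℝ) ^ (N - 1 + 1) :=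
        pow_sum_le_card_mul_sum_pow (fun _ _ => Nat.cast_nonneg _) (N - 1)
    _ = (T.card : ℝ) ^ (N - 1) * ∑ t ∈ T, (ff t : ℝ) ^ N := by rw [hN1]
    _ ≤ (T.card : ℝ) ^ (N - 1) * ∏ j : Fin N, ((F.image (phiMat N j)).card : ℝ) := by
        apply mul_le_mul_of_nonneg_left _ (by positivity)
        exact_mod_cast hkey

/-- Per-segment bound: if the total number of array entries accessed,
`∑_{j=1}^{N+1} |φ_j(F)|`, is at most `3M`, then `|F| ≤ (3M)^{2-1/N}/N`. -/
theorem stmt_6 (N : ℕ) (hN : 2 ≤ N) (M : ℝ) (hM : 0 < M)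
    (F : Finset (Fin (N + 1) → ℤ))
    (h : ((F.image (phiTen N)).card : ℝ)
        + ∑ j : Fin N, ((F.image (phiMat N j)).card : ℝ) ≤ 3 * M) :
    (F.card : ℝ) ≤ (3 * M) ^ (2 - 1 / (N : ℝ)) / N := by
  set b : Fin N → ℝ := fun j => ((F.image (phiMat N j)).card : ℝ) with hb
  set a : ℝ := ((F.image (phiTen N)).card : ℝ) with ha
  have hbnn : ∀ j, 0 ≤ b j := fun j => Nat.cast_nonneg _
  have hBsum : (0:ℝ) ≤ ∑ j, b j := Finset.sum_nonneg fun j _ => hbnn j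
  have hann : (0:ℝ) ≤ a := Nat.cast_nonneg _
  have ha3 : a ≤ 3 * M := by linarith
  have hB3 : (∑ j, b j) ≤ 3 * M := by linarith
  have h3M : (0:ℝ) < 3 * M := by linarith
  have hNrpos : (0:ℝ) < (N : ℝ) := by
    have : 0 < N := by omega
    exact_mod_cast this
  have hreal : (F.card : ℝ) ^ N ≤ a ^ (N - 1) * ∏ j, b j :=
    mttkrp_hbl N (by omega) F
  -- take N-th roots
  have hroot : (F.card : ℝ) ≤ (a ^ (N - 1) * ∏ j, b j) ^ (1 / (N:ℝ)) := by
    have h2 := Real.rpow_le_rpow (by positivity) hreal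
      (by positivity : (0:ℝ) ≤ 1 / (N:ℝ))
    rwa [← Real.rpow_natCast (F.card : ℝ) N, ← Real.rpow_mul (by positivity),
      mul_one_div, div_self (ne_of_gt hNrpos), Real.rpow_one] at h2
  have hsplit : (a ^ (N - 1) * ∏ j, b j) ^ (1 / (N:ℝ))
      = (a ^ (N - 1)) ^ (1 / (N:ℝ)) * ∏ j, (b j) ^ (1 / (N:ℝ)) := by
    rw [Real.mul_rpow (by positivity) (Finset.prod_nonneg fun j _ => hbnn j),
      Real.finset_prod_rpow _ _ (fun j _ => hbnn j)]
  -- AM-GM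
  have hamgm : ∏ j, (b j) ^ (1 / (N:ℝ)) ≤ (∑ j, b j) / N := by
    have hw : ∑ _j : Fin N, 1 / (N:ℝ) = 1 := by
      rw [Finset.sum_const, Finset.card_univ, Fintype.card_fin, nsmul_eq_mul,
        mul_one_div, div_self (ne_of_gt hNrpos)]
    have hgm := Real.geom_mean_le_arith_mean_weighted Finset.univ (fun _ => 1 / (N:ℝ)) b
      (fun _ _ => by positivity) hw (fun j _ => hbnn j)
    calc ∏ j, (b j) ^ (1 / (N:ℝ)) ≤ ∑ j, (1 / (N:ℝ)) * b j := hgm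
      _ = (∑ j, b j) / N := by
        rw [← Finset.mul_sum, one_div, inv_mul_eq_div]
  -- first factor bound
  have hfac : (a ^ (N - 1)) ^ (1 / (N:ℝ)) ≤ (3 * M) ^ (((N - 1 : ℕ) : ℝ) * (1 / (N:ℝ))) := by
    rw [← Real.rpow_natCast a (N - 1), ← Real.rpow_mul hann]
    exact Real.rpow_le_rpow hann ha3 (by positivity)
  have hexp : 2 - 1 / (N:ℝ) = ((N - 1 : ℕ) : ℝ) * (1 / (N:ℝ)) + 1 := by
    rw [Nat.cast_sub (by omega : 1 ≤ N)]
    field_simp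
    ring
  calc (F.card : ℝ) ≤ (a ^ (N - 1)) ^ (1 / (N:ℝ)) * ∏ j, (b j) ^ (1 / (N:ℝ)) := by
        rw [← hsplit]; exact hroot
    _ ≤ (3 * M) ^ (((N - 1 : ℕ) : ℝ) * (1 / (N:ℝ))) * ((∑ j, b j) / N) :=
        mul_le_mul hfac hamgm (Finset.prod_nonneg fun j _ => by positivity)
          (Real.rpow_nonneg (le_of_lt h3M) _)
    _ ≤ (3 * M) ^ (((N - 1 : ℕ) : ℝ) * (1 / (N:ℝ))) * ((3 * M) / N) := by
        apply mul_le_mul_of_nonneg_left _ (Real.rpow_nonneg (le_of_lt h3M) _)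
        gcongr
    _ = (3 * M) ^ (2 - 1 / (N:ℝ)) / N := by
        rw [hexp, Real.rpow_add_one (ne_of_gt h3M)]
        ring
end

section
/- Let N ≥ 2 be an integer. For every finite set F ⊆ ℤ^{N+1}, it holds that ∑_{j=1}^{N+1} |φ_j(F)| ≥ (2 − 1/N) · (N·|F|)^{N/(2N−1)}. -/
set_option maxHeartbeats 1000000

open Finset

lemma slice_inj (N : ℕ) (F : Finset (Fin (N+1) → ℤ)) (r : ℤ) :
    Set.InjOn (phiTen N) (F.filter (fun x => x (Fin.last N) = r)) := by
  intro x hx y hy hxy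
  simp only [coe_filter, Set.mem_setOf_eq] at hx hy
  funext i
  refine Fin.lastCases ?_ ?_ i
  · rw [hx.2, hy.2]
  · intro j; exact congrFun hxy j

lemma slice_card_le_ten (N : ℕ) (F : Finset (Fin (N+1) → ℤ)) (r : ℤ) :
    (F.filter (fun x => x (Fin.last N) = r)).card ≤ (F.image (phiTen N)).card := by
  classical
  calc (F.filter (fun x => x (Fin.last N) = r)).card
      = ((F.filter (fun x => x (Fin.last N) = r)).image (phiTen N)).card :=
        (Finset.card_image_of_injOn (slice_inj N F r)).symm
    _ ≤ _ := Finset.card_le_card (Finset.image_subset_image (Finset.filter_subset _ _))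

lemma slice_card_le_prod (N : ℕ) (F : Finset (Fin (N+1) → ℤ)) (r : ℤ) :
    (F.filter (fun x => x (Fin.last N) = r)).card ≤
      ∏ j : Fin N,
        ((F.filter (fun x => x (Fin.last N) = r)).image (fun x => x j.castSucc)).card := by
  classical
  set Fr := F.filter (fun x => x (Fin.last N) = r) with hFr
  have h1 : Fr.card = (Fr.image (phiTen N)).card :=
    (Finset.card_image_of_injOn (slice_inj N F r)).symm
  have h2 : Fr.image (phiTen N) ⊆
      Fintype.piFinset (fun j => Fr.image (fun x => x j.castSucc)) := by
    intro y hy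
    obtain ⟨x, hx, rfl⟩ := Finset.mem_image.mp hy
    rw [Fintype.mem_piFinset]
    intro j
    exact Finset.mem_image_of_mem _ hx
  have h3 := Finset.card_le_card h2
  rw [Fintype.card_piFinset] at h3
  rw [h1]
  exact h3

lemma sum_slice_mat_le (N : ℕ) (F : Finset (Fin (N+1) → ℤ)) (j : Fin N) :
    ∑ r ∈ F.image (fun x => x (Fin.last N)),
      ((F.filter (fun x => x (Fin.last N) = r)).image (fun x => x (Fin.castSucc j))).card
      ≤ (F.image (phiMat N j)).card := by
  classical
  set R := F.image (fun x => x (Fin.last N)) with hR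
  have hcard : ∀ r,
      ((F.filter (fun x => x (Fin.last N) = r)).image (fun x => x (Fin.castSucc j))).card
      = ((F.filter (fun x => x (Fin.last N) = r)).image (phiMat N j)).card := by
    intro r
    set Fr := F.filter (fun x => x (Fin.last N) = r) with hFr
    have : Fr.image (phiMat N j) = (Fr.image (fun x => x (Fin.castSucc j))).image
        (fun i => (i, r)) := by
      rw [Finset.image_image]
      apply Finset.image_congr
      intro x hx
      simp only [hFr, coe_filter, Set.mem_setOf_eq] at hx
      simp [phiMat, Function.comp, hx.2]
    rw [this]
    exact (Finset.card_image_of_injective _ (fun a b h => by simpa using h)).symm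
  calc ∑ r ∈ R, ((F.filter (fun x => x (Fin.last N) = r)).image
        (fun x => x (Fin.castSucc j))).card
      = ∑ r ∈ R, ((F.filter (fun x => x (Fin.last N) = r)).image (phiMat N j)).card := by
        exact Finset.sum_congr rfl (fun r _ => hcard r)
    _ = (R.biUnion (fun r => (F.filter (fun x => x (Fin.last N) = r)).image
          (phiMat N j))).card := by
        rw [Finset.card_biUnion]
        intro r1 _ r2 _ hne
        rw [Function.onFun, Finset.disjoint_left]
        intro p hp1 hp2
        obtain ⟨x, hx, rfl⟩ := Finset.mem_image.mp hp1
        obtain ⟨y, hy, hxy⟩ := Finset.mem_image.mp hp2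
        rw [Finset.mem_filter] at hx hy
        apply hne
        have := congrArg Prod.snd hxy
        simp only [phiMat] at this
        rw [← hx.2, ← hy.2, this]
    _ ≤ (F.image (phiMat N j)).card := by
        apply Finset.card_le_card
        intro p hp
        obtain ⟨r, _, hp⟩ := Finset.mem_biUnion.mp hp
        obtain ⟨x, hx, rfl⟩ := Finset.mem_image.mp hp
        exact Finset.mem_image_of_mem _ (Finset.mem_filter.mp hx).1


lemma key_s7 (N : ℕ) (hN : 2 ≤ N) (F : Finset (Fin (N + 1) → ℤ)) :
    (N : ℝ) * F.card ≤
      ((F.image (phiTen N)).card : ℝ) ^ (((N : ℝ) - 1) / N)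
        * ∑ j : Fin N, ((F.image (phiMat N j)).card : ℝ) := by
  classical
  have hN2 : (2:ℝ) ≤ (N:ℝ) := by exact_mod_cast hN
  have hN0 : (0:ℝ) < N := by linarith
  set T : ℕ := (F.image (phiTen N)).card with hT
  set R : Finset ℤ := F.image (fun x => x (Fin.last N)) with hR
  set e : ℝ := ((N:ℝ) - 1) / N with he
  have he0 : 0 ≤ e := div_nonneg (by linarith) hN0.le
  have hTe : (0:ℝ) ≤ (T:ℝ) ^ e := Real.rpow_nonneg (Nat.cast_nonneg T) e
  have hslice : ∀ r ∈ R,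
      (N:ℝ) * ((F.filter (fun x => x (Fin.last N) = r)).card : ℝ) ≤
      (T:ℝ) ^ e * ∑ j : Fin N,
        (((F.filter (fun x => x (Fin.last N) = r)).image
          (fun x => x (Fin.castSucc j))).card : ℝ) := by
    intro r _
    set Fr := F.filter (fun x => x (Fin.last N) = r) with hFr
    set m : Fin N → ℕ := fun j => (Fr.image (fun x => x (Fin.castSucc j))).card with hm
    have hnat : Fr.card ^ N ≤ T ^ (N - 1) * ∏ j : Fin N, m j := by
      have h1 : Fr.card ^ (N-1) ≤ T ^ (N-1) :=
        Nat.pow_le_pow_left (slice_card_le_ten N F r) _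
      have h2 : Fr.card ≤ ∏ j : Fin N, m j := slice_card_le_prod N F r
      calc Fr.card ^ N = Fr.card ^ (N-1) * Fr.card := by
            rw [← pow_succ]; congr 1; omega
        _ ≤ T ^ (N-1) * ∏ j : Fin N, m j := Nat.mul_le_mul h1 h2
    have hreal : ((Fr.card : ℝ)) ^ (N:ℕ) ≤ (T:ℝ) ^ (N-1:ℕ) * ∏ j : Fin N, (m j : ℝ) := by
      exact_mod_cast hnat
    have hc : (Fr.card : ℝ) ≤ (T:ℝ) ^ e * ∏ j : Fin N, (m j : ℝ) ^ ((N:ℝ)⁻¹) := by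
      have h0 : (Fr.card : ℝ) = (((Fr.card : ℝ)) ^ (N:ℕ)) ^ ((N:ℝ)⁻¹) :=
        (Real.pow_rpow_inv_natCast (Nat.cast_nonneg _) (by omega)).symm
      rw [h0]
      have h3 : (((Fr.card : ℝ)) ^ (N:ℕ)) ^ ((N:ℝ)⁻¹) ≤
          ((T:ℝ) ^ (N-1:ℕ) * ∏ j : Fin N, (m j : ℝ)) ^ ((N:ℝ)⁻¹) :=
        Real.rpow_le_rpow (pow_nonneg (Nat.cast_nonneg _) _) hreal (by positivity)
      refine h3.trans_eq ?_
      rw [Real.mul_rpow (pow_nonneg (Nat.cast_nonneg _) _) (Finset.prod_nonneg fun i _ => Nat.cast_nonneg _)]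
      congr 1
      · rw [← Real.rpow_natCast (T:ℝ) (N-1), ← Real.rpow_mul (Nat.cast_nonneg T)]
        congr 1
        rw [Nat.cast_sub (by omega), Nat.cast_one, he]
        field_simp
      · rw [← Real.finset_prod_rpow _ _ (fun i _ => Nat.cast_nonneg _) _]
    have hgm : ∏ j : Fin N, (m j : ℝ) ^ ((N:ℝ)⁻¹) ≤
        ∑ j : Fin N, (N:ℝ)⁻¹ * (m j : ℝ) :=
      Real.geom_mean_le_arith_mean_weighted _ _ _ (fun i _ => by positivity)
        (by simp [Finset.card_univ]; field_simp) (fun i _ => Nat.cast_nonneg _)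
    have h4 : (Fr.card:ℝ) ≤ (T:ℝ) ^ e * ((N:ℝ)⁻¹ * ∑ j : Fin N, (m j : ℝ)) := by
      refine hc.trans (mul_le_mul_of_nonneg_left (hgm.trans_eq ?_) hTe)
      rw [← Finset.mul_sum]
    calc (N:ℝ) * (Fr.card:ℝ)
        ≤ (N:ℝ) * ((T:ℝ) ^ e * ((N:ℝ)⁻¹ * ∑ j : Fin N, (m j : ℝ))) :=
          mul_le_mul_of_nonneg_left h4 hN0.le
      _ = (T:ℝ) ^ e * ∑ j : Fin N, (m j : ℝ) := by
          field_simp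
  have hF : F.card = ∑ r ∈ R, (F.filter (fun x => x (Fin.last N) = r)).card :=
    Finset.card_eq_sum_card_fiberwise (fun x hx => Finset.mem_image_of_mem _ hx)
  calc (N:ℝ) * F.card
      = ∑ r ∈ R, (N:ℝ) * ((F.filter (fun x => x (Fin.last N) = r)).card : ℝ) := by
        rw [hF]; push_cast; rw [Finset.mul_sum]
    _ ≤ ∑ r ∈ R, (T:ℝ) ^ e * ∑ j : Fin N,
          (((F.filter (fun x => x (Fin.last N) = r)).image
            (fun x => x (Fin.castSucc j))).card : ℝ) :=
        Finset.sum_le_sum hslice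
    _ = (T:ℝ) ^ e * ∑ j : Fin N, ∑ r ∈ R,
          (((F.filter (fun x => x (Fin.last N) = r)).image
            (fun x => x (Fin.castSucc j))).card : ℝ) := by
        rw [← Finset.mul_sum]
        congr 1
        exact Finset.sum_comm
    _ ≤ (T:ℝ) ^ e * ∑ j : Fin N, ((F.image (phiMat N j)).card : ℝ) := by
        apply mul_le_mul_of_nonneg_left _ hTe
        apply Finset.sum_le_sum
        intro j _
        exact_mod_cast sum_slice_mat_le N F j

/-- Memory-independent projection bound:
`∑_{j=1}^{N+1} |φ_j(F)| ≥ (2 - 1/N) (N|F|)^{N/(2N-1)}`. -/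
theorem stmt_7 (N : ℕ) (hN : 2 ≤ N) (F : Finset (Fin (N + 1) → ℤ)) :
    (2 - 1 / (N : ℝ)) * ((N : ℝ) * F.card) ^ ((N : ℝ) / (2 * N - 1))
      ≤ ((F.image (phiTen N)).card : ℝ)
        + ∑ j : Fin N, ((F.image (phiMat N j)).card : ℝ) := by
  classical
  have hN2 : (2:ℝ) ≤ (N:ℝ) := by exact_mod_cast hN
  have hN0 : (0:ℝ) < N := by linarith
  have hD : (0:ℝ) < 2*(N:ℝ) - 1 := by linarith
  set T : ℝ := ((F.image (phiTen N)).card : ℝ) with hT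
  set S : ℝ := ∑ j : Fin N, ((F.image (phiMat N j)).card : ℝ) with hS
  have hT0 : (0:ℝ) ≤ T := Nat.cast_nonneg _
  have hS0 : (0:ℝ) ≤ S := Finset.sum_nonneg fun j _ => Nat.cast_nonneg _
  set w1 : ℝ := ((N:ℝ)-1)/(2*(N:ℝ)-1) with hw1
  set w2 : ℝ := (N:ℝ)/(2*(N:ℝ)-1) with hw2
  have hw10 : 0 < w1 := div_pos (by linarith) hD
  have hw20 : 0 < w2 := div_pos (by linarith) hD
  have hw12 : w1 + w2 = 1 := by rw [hw1, hw2, ← add_div, div_eq_one_iff_eq hD.ne']; ring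
  have hw1le : w1 ≤ w2 := by
    rw [hw1, hw2, div_le_div_iff_of_pos_right hD]
    linarith
  have hkey : (N:ℝ) * F.card ≤ T ^ (((N:ℝ)-1)/N) * S := key_s7 N hN F
  have h2 : 2 - 1/(N:ℝ) = 1/w2 := by rw [hw2]; field_simp
  have hA0 : (0:ℝ) ≤ (N:ℝ)*F.card := by positivity
  have h3 : ((N:ℝ)*F.card) ^ w2 ≤ (T ^ (((N:ℝ)-1)/N) * S) ^ w2 :=
    Real.rpow_le_rpow hA0 hkey hw20.le
  have h4 : (T ^ (((N:ℝ)-1)/N) * S) ^ w2 = T ^ w1 * S ^ w2 := by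
    rw [Real.mul_rpow (Real.rpow_nonneg hT0 _) hS0, ← Real.rpow_mul hT0]
    congr 2
    rw [hw1, hw2]
    field_simp
  have hw : w1 ^ w1 * w2 ^ w2 ≤ w2 := by
    calc w1 ^ w1 * w2 ^ w2 ≤ w2 ^ w1 * w2 ^ w2 :=
          mul_le_mul_of_nonneg_right (Real.rpow_le_rpow hw10.le hw1le hw10.le)
            (Real.rpow_nonneg hw20.le _)
      _ = w2 ^ (w1 + w2) := (Real.rpow_add hw20 _ _).symm
      _ = w2 := by rw [hw12, Real.rpow_one]
  have hgm2 : (T/w1) ^ w1 * (S/w2) ^ w2 ≤ w1 * (T/w1) + w2 * (S/w2) :=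
    Real.geom_mean_le_arith_mean2_weighted hw10.le hw20.le (div_nonneg hT0 hw10.le)
      (div_nonneg hS0 hw20.le) hw12
  have h5 : (1/w2) * (T ^ w1 * S ^ w2) ≤ T + S := by
    have hEq : (T/w1) ^ w1 * (S/w2) ^ w2 = (T ^ w1 * S ^ w2) / (w1 ^ w1 * w2 ^ w2) := by
      rw [Real.div_rpow hT0 hw10.le, Real.div_rpow hS0 hw20.le]
      ring
    have hRHS : w1 * (T/w1) + w2 * (S/w2) = T + S := by
      field_simp
    have hX0 : (0:ℝ) ≤ T ^ w1 * S ^ w2 :=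
      mul_nonneg (Real.rpow_nonneg hT0 _) (Real.rpow_nonneg hS0 _)
    have hP : (0:ℝ) < w1 ^ w1 * w2 ^ w2 :=
      mul_pos (Real.rpow_pos_of_pos hw10 _) (Real.rpow_pos_of_pos hw20 _)
    have hle : (1/w2) * (T ^ w1 * S ^ w2) ≤ (T ^ w1 * S ^ w2) / (w1 ^ w1 * w2 ^ w2) := by
      calc (1/w2) * (T ^ w1 * S ^ w2)
          ≤ (1/(w1 ^ w1 * w2 ^ w2)) * (T ^ w1 * S ^ w2) :=
            mul_le_mul_of_nonneg_right (one_div_le_one_div_of_le hP hw) hX0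
        _ = (T ^ w1 * S ^ w2) / (w1 ^ w1 * w2 ^ w2) := by
            rw [one_div, div_eq_mul_inv]; ring
    calc (1/w2) * (T ^ w1 * S ^ w2) ≤ (T ^ w1 * S ^ w2) / (w1 ^ w1 * w2 ^ w2) := hle
      _ = (T/w1) ^ w1 * (S/w2) ^ w2 := hEq.symm
      _ ≤ w1 * (T/w1) + w2 * (S/w2) := hgm2
      _ = T + S := hRHS
  calc (2 - 1/(N:ℝ)) * ((N:ℝ) * F.card) ^ ((N:ℝ)/(2*(N:ℝ)-1))
      = (1/w2) * ((N:ℝ) * F.card) ^ w2 := by rw [h2, hw2]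
    _ ≤ (1/w2) * (T ^ (((N:ℝ)-1)/N) * S) ^ w2 :=
        mul_le_mul_of_nonneg_left h3 (by positivity : (0:ℝ) ≤ 1/w2)
    _ = (1/w2) * (T ^ w1 * S ^ w2) := by rw [h4]
    _ ≤ T + S := h5
end

section
/- Let N ≥ 2 be an integer and T > 0 a real number. If a finite set F ⊆ ℤ^{N+1} satisfies |φ_{N+1}(F)| ≤ T, then ∏_{j=1}^{N} |φ_j(F)| ≥ |F|^N / T^{N−1}. -/
open Finset Real in
/-- Generalized Hölder inequality with equal weights `1/N`. -/
lemma holder_eq_weights {ι : Type*} (N : ℕ) (hN : 0 < N) (s : Finset ι)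
    (a : Fin N → ι → ℝ) (ha : ∀ j r, 0 ≤ a j r) :
    ∑ r ∈ s, ∏ j, (a j r) ^ ((N : ℝ)⁻¹)
      ≤ ∏ j, (∑ r ∈ s, a j r) ^ ((N : ℝ)⁻¹) := by
  have hNR : (0:ℝ) < (N:ℝ) := by exact_mod_cast hN
  by_cases hz : ∃ j, ∑ r ∈ s, a j r = 0
  · obtain ⟨j0, hj0⟩ := hz
    have hzero : ∀ r ∈ s, a j0 r = 0 := by
      intro r hr
      exact (Finset.sum_eq_zero_iff_of_nonneg (fun i _ => ha j0 i)).1 hj0 r hr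
    have hL : ∑ r ∈ s, ∏ j, (a j r) ^ ((N : ℝ)⁻¹) = 0 := by
      refine Finset.sum_eq_zero fun r hr => ?_
      refine Finset.prod_eq_zero (Finset.mem_univ j0) ?_
      rw [hzero r hr]
      exact Real.zero_rpow (by positivity)
    rw [hL]
    exact Finset.prod_nonneg fun j _ => Real.rpow_nonneg
      (Finset.sum_nonneg fun i _ => ha j i) _
  · push_neg at hz
    set S : Fin N → ℝ := fun j => ∑ r ∈ s, a j r with hS
    have hSpos : ∀ j, 0 < S j := fun j =>
      lt_of_le_of_ne (Finset.sum_nonneg fun i _ => ha j i) (Ne.symm (hz j))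
    have key : ∑ r ∈ s, ∏ j, (a j r / S j) ^ ((N : ℝ)⁻¹) ≤ 1 := by
      calc ∑ r ∈ s, ∏ j, (a j r / S j) ^ ((N : ℝ)⁻¹)
          ≤ ∑ r ∈ s, ∑ j, (N : ℝ)⁻¹ * (a j r / S j) := by
            refine Finset.sum_le_sum fun r _ => ?_
            refine Real.geom_mean_le_arith_mean_weighted Finset.univ
              (fun _ => (N : ℝ)⁻¹) (fun j => a j r / S j)
              (fun _ _ => by positivity) ?_
              (fun j _ => div_nonneg (ha j r) (hSpos j).le)
            simp [Finset.sum_const, mul_inv_cancel₀ hNR.ne']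
        _ = ∑ j : Fin N, (N : ℝ)⁻¹ * ((∑ r ∈ s, a j r) / S j) := by
            rw [Finset.sum_comm]
            simp [Finset.mul_sum, Finset.sum_div]
        _ = 1 := by
            have : ∀ j : Fin N, (N : ℝ)⁻¹ * ((∑ r ∈ s, a j r) / S j) = (N : ℝ)⁻¹ := by
              intro j
              rw [hS, div_self (hSpos j).ne']
              · ring
            rw [Finset.sum_congr rfl fun j _ => this j]
            simp [mul_inv_cancel₀ hNR.ne']
    have expand : ∀ r, ∏ j, (a j r / S j) ^ ((N : ℝ)⁻¹)
        = (∏ j, (a j r) ^ ((N : ℝ)⁻¹)) / ∏ j, (S j) ^ ((N : ℝ)⁻¹) := by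
      intro r
      rw [← Finset.prod_div_distrib]
      refine Finset.prod_congr rfl fun j _ => ?_
      rw [Real.div_rpow (ha j r) (hSpos j).le]
    have hP : 0 < ∏ j, (S j) ^ ((N : ℝ)⁻¹) :=
      Finset.prod_pos fun j _ => Real.rpow_pos_of_pos (hSpos j) _
    calc ∑ r ∈ s, ∏ j, (a j r) ^ ((N : ℝ)⁻¹)
        = (∑ r ∈ s, ∏ j, (a j r / S j) ^ ((N : ℝ)⁻¹)) * ∏ j, (S j) ^ ((N : ℝ)⁻¹) := by
          rw [Finset.sum_mul]
          refine Finset.sum_congr rfl fun r _ => ?_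
          rw [expand r, div_mul_cancel₀ _ hP.ne']
      _ ≤ 1 * ∏ j, (S j) ^ ((N : ℝ)⁻¹) := by
          exact mul_le_mul_of_nonneg_right key hP.le
      _ = ∏ j, (S j) ^ ((N : ℝ)⁻¹) := one_mul _

/-- Rectangular case: if `|φ_{N+1}(F)| ≤ T` then
`∏_{j=1}^{N} |φ_j(F)| ≥ |F|^N / T^{N-1}`. -/
theorem stmt_8 (N : ℕ) (hN : 2 ≤ N) (T : ℝ) (hT : 0 < T)
    (F : Finset (Fin (N + 1) → ℤ))
    (h : ((F.image (phiTen N)).card : ℝ) ≤ T) :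
    (F.card : ℝ) ^ (N : ℝ) / T ^ ((N : ℝ) - 1)
      ≤ ∏ j : Fin N, ((F.image (phiMat N j)).card : ℝ) := by
  have hN0 : 0 < N := by omega
  have hNR : (0:ℝ) < (N:ℝ) := by exact_mod_cast hN0
  set R : Finset ℤ := F.image (fun x => x (Fin.last N)) with hR
  set Fr : ℤ → Finset (Fin (N + 1) → ℤ) :=
    fun r => F.filter (fun x => x (Fin.last N) = r) with hFr
  set a : Fin N → ℤ → ℕ := fun j r => ((Fr r).image (fun x => x j.castSucc)).card with ha
  set c : Fin N → ℕ := fun j => (F.image (phiMat N j)).card with hc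
  -- injectivity of phiTen on each fiber
  have hinj : ∀ r : ℤ, Set.InjOn (phiTen N) (Fr r) := by
    intro r x hx y hy hxy
    simp only [hFr, Finset.coe_filter, Set.mem_setOf_eq] at hx hy
    funext i
    refine Fin.lastCases ?_ ?_ i
    · rw [hx.2, hy.2]
    · intro i
      exact congrFun hxy i
  -- Step A
  have stepA : F.card = ∑ r ∈ R, (Fr r).card := by
    refine Finset.card_eq_sum_card_fiberwise ?_
    intro x hx
    exact Finset.mem_image_of_mem _ hx
  -- Step B
  have stepB : ∀ j : Fin N, c j = ∑ r ∈ R, a j r := by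
    intro j
    have h1 : c j = ∑ r ∈ R, ((F.image (phiMat N j)).filter (fun p => p.2 = r)).card := by
      refine Finset.card_eq_sum_card_fiberwise ?_
      rintro p hp
      simp only [Finset.mem_coe, Finset.mem_image, phiMat] at hp
      obtain ⟨x, hx, rfl⟩ := hp
      exact Finset.mem_image_of_mem _ hx
    rw [h1]
    refine Finset.sum_congr rfl fun r _ => ?_
    have h2 : (F.image (phiMat N j)).filter (fun p => p.2 = r)
        = ((Fr r).image (fun x => x j.castSucc)).image (fun i => (i, r)) := by
      rw [Finset.filter_image, Finset.image_image]
      have hset : F.filter (fun x => (phiMat N j x).2 = r) = Fr r := rfl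
      rw [hset]
      refine Finset.image_congr ?_
      intro x hx
      simp only [Finset.mem_coe, hFr, Finset.mem_filter] at hx
      simp [phiMat, Function.comp, hx.2]
    rw [h2, Finset.card_image_of_injective _ (fun u v huv => by simpa using huv)]
  -- Step C
  have stepC : ∀ r : ℤ, ((Fr r).card : ℝ) ≤ T := by
    intro r
    refine le_trans ?_ h
    have : (Fr r).card ≤ (F.image (phiTen N)).card := by
      refine Finset.card_le_card_of_injOn (phiTen N) ?_ (hinj r)
      intro x hx
      exact Finset.mem_image_of_mem _ (Finset.mem_of_mem_filter x hx)
    exact_mod_cast this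
  -- Step D
  have stepD : ∀ r : ℤ, (Fr r).card ≤ ∏ j, a j r := by
    intro r
    have hsub : (Fr r).card ≤ (Fintype.piFinset (fun (j : Fin N) => (Fr r).image
        (fun x => x j.castSucc))).card := by
      refine Finset.card_le_card_of_injOn (phiTen N) ?_ (hinj r)
      intro x hx
      rw [Finset.mem_coe, Fintype.mem_piFinset]
      intro j
      exact Finset.mem_image_of_mem _ hx
    rwa [Fintype.card_piFinset] at hsub
  -- real-valued main chain
  have key : (F.card : ℝ) ≤ (∏ j, ((c j : ℝ)) ^ ((N:ℝ)⁻¹)) * T ^ (((N:ℝ) - 1) * (N:ℝ)⁻¹) := by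
    have hTe : T ^ ((N - 1 : ℕ) : ℝ) = T ^ ((N:ℝ) - 1) := by
      congr 1
      push_cast [Nat.cast_sub (by omega : 1 ≤ N)]
      ring
    have hbr : ∀ r ∈ R, ((Fr r).card : ℝ)
        ≤ (∏ j, ((a j r : ℝ))) ^ ((N:ℝ)⁻¹) * T ^ (((N:ℝ) - 1) * (N:ℝ)⁻¹) := by
      intro r _
      have hb0 : (0:ℝ) ≤ ((Fr r).card : ℝ) := Nat.cast_nonneg _
      have hprod0 : (0:ℝ) ≤ ∏ j, ((a j r : ℝ)) :=
        Finset.prod_nonneg fun j _ => Nat.cast_nonneg _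
      have hpow : ((Fr r).card : ℝ) ^ (N : ℕ) ≤ (∏ j, ((a j r : ℝ))) * T ^ (N - 1 : ℕ) := by
        have h1 : ((Fr r).card : ℝ) ≤ ∏ j, ((a j r : ℝ)) := by
          exact_mod_cast stepD r
        have h2 : ((Fr r).card : ℝ) ^ (N - 1 : ℕ) ≤ T ^ (N - 1 : ℕ) :=
          pow_le_pow_left₀ hb0 (stepC r) _
        calc ((Fr r).card : ℝ) ^ (N : ℕ)
            = ((Fr r).card : ℝ) * ((Fr r).card : ℝ) ^ (N - 1 : ℕ) := by
              rw [← pow_succ']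
              congr 1
              omega
          _ ≤ (∏ j, ((a j r : ℝ))) * T ^ (N - 1 : ℕ) :=
              mul_le_mul h1 h2 (by positivity) hprod0
      calc ((Fr r).card : ℝ)
          = ((((Fr r).card : ℝ) ^ (N : ℕ)) : ℝ) ^ ((N:ℝ)⁻¹) := by
            rw [← Real.rpow_natCast ((Fr r).card : ℝ) N, ← Real.rpow_mul hb0,
              mul_inv_cancel₀ hNR.ne', Real.rpow_one]
        _ ≤ ((∏ j, ((a j r : ℝ))) * T ^ (N - 1 : ℕ)) ^ ((N:ℝ)⁻¹) :=
            Real.rpow_le_rpow (by positivity) hpow (by positivity)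
        _ = (∏ j, ((a j r : ℝ))) ^ ((N:ℝ)⁻¹) * T ^ (((N:ℝ) - 1) * (N:ℝ)⁻¹) := by
            rw [Real.mul_rpow hprod0 (by positivity), ← Real.rpow_natCast T (N - 1), hTe,
              ← Real.rpow_mul hT.le]
    calc (F.card : ℝ) = ∑ r ∈ R, ((Fr r).card : ℝ) := by exact_mod_cast stepA
      _ ≤ ∑ r ∈ R, (∏ j, ((a j r : ℝ))) ^ ((N:ℝ)⁻¹) * T ^ (((N:ℝ) - 1) * (N:ℝ)⁻¹) :=
          Finset.sum_le_sum hbr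
      _ = (∑ r ∈ R, ∏ j, ((a j r : ℝ)) ^ ((N:ℝ)⁻¹)) * T ^ (((N:ℝ) - 1) * (N:ℝ)⁻¹) := by
          rw [Finset.sum_mul]
          refine Finset.sum_congr rfl fun r _ => ?_
          rw [← Real.finset_prod_rpow _ _ (fun j _ => Nat.cast_nonneg _)]
      _ ≤ (∏ j, (∑ r ∈ R, ((a j r : ℝ))) ^ ((N:ℝ)⁻¹)) * T ^ (((N:ℝ) - 1) * (N:ℝ)⁻¹) := by
          refine mul_le_mul_of_nonneg_right ?_ (by positivity)
          exact holder_eq_weights N hN0 R (fun j r => (a j r : ℝ))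
            (fun j r => Nat.cast_nonneg _)
      _ = (∏ j, ((c j : ℝ)) ^ ((N:ℝ)⁻¹)) * T ^ (((N:ℝ) - 1) * (N:ℝ)⁻¹) := by
          congr 1
          refine Finset.prod_congr rfl fun j _ => ?_
          congr 1
          rw [stepB j]
          push_cast
          ring
  -- raise to the N-th power and conclude
  have hcprod0 : (0:ℝ) ≤ ∏ j, ((c j : ℝ)) := Finset.prod_nonneg fun j _ => Nat.cast_nonneg _
  have hTpow : (0:ℝ) < T ^ ((N:ℝ) - 1) := Real.rpow_pos_of_pos hT _
  rw [div_le_iff₀ hTpow]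
  calc (F.card : ℝ) ^ (N : ℝ)
      ≤ ((∏ j, ((c j : ℝ)) ^ ((N:ℝ)⁻¹)) * T ^ (((N:ℝ) - 1) * (N:ℝ)⁻¹)) ^ (N : ℝ) :=
        Real.rpow_le_rpow (Nat.cast_nonneg _) key hNR.le
    _ = (∏ j, ((c j : ℝ))) * T ^ ((N:ℝ) - 1) := by
        rw [Real.mul_rpow (Finset.prod_nonneg fun j _ => Real.rpow_nonneg (Nat.cast_nonneg _) _)
          (Real.rpow_nonneg hT.le _),
          Real.finset_prod_rpow _ _ (fun j _ => Nat.cast_nonneg _),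
          ← Real.rpow_mul hcprod0, ← Real.rpow_mul hT.le,
          inv_mul_cancel₀ hNR.ne', Real.rpow_one,
          mul_assoc ((N:ℝ) - 1), inv_mul_cancel₀ hNR.ne', mul_one]
end

section
/- Let N ≥ 2 be an integer and T > 0 a real number. If a finite set F ⊆ ℤ^{N+1} satisfies |φ_{N+1}(F)| ≤ T, then ∑_{j=1}^{N} |φ_j(F)| ≥ N·|F| / T^{(N−1)/N}. -/
/-- Real inequality per fiber: if `0 ≤ c ≤ T`, `c ≤ ∏ a j` with `a j ≥ 0`, then
`n c / T^((n-1)/n) ≤ ∑ a j`. -/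
lemma aux_fiber (n : ℕ) (hn : 0 < n) (T : ℝ) (hT : 0 < T) (c : ℝ) (a : Fin n → ℝ)
    (ha : ∀ j, 0 ≤ a j) (hc0 : 0 ≤ c) (hcT : c ≤ T) (hca : c ≤ ∏ j, a j) :
    (n : ℝ) * c / T ^ (((n : ℝ) - 1) / n) ≤ ∑ j, a j := by
  have hn' : (0 : ℝ) < n := by exact_mod_cast hn
  have he : (0 : ℝ) ≤ ((n : ℝ) - 1) / n := by
    apply div_nonneg _ hn'.le
    have : (1 : ℝ) ≤ n := by exact_mod_cast hn
    linarith
  have hTe : (0 : ℝ) < T ^ (((n : ℝ) - 1) / n) := Real.rpow_pos_of_pos hT _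
  have hsum : (1 : ℝ) / n + ((n : ℝ) - 1) / n = 1 := by field_simp; ring
  have key : c ≤ c ^ ((1 : ℝ) / n) * T ^ (((n : ℝ) - 1) / n) := by
    calc c = c ^ ((1 : ℝ) / n + ((n : ℝ) - 1) / n) := by rw [hsum, Real.rpow_one]
    _ = c ^ ((1 : ℝ) / n) * c ^ (((n : ℝ) - 1) / n) := by
        rw [Real.rpow_add' hc0 (by rw [hsum]; norm_num)]
    _ ≤ c ^ ((1 : ℝ) / n) * T ^ (((n : ℝ) - 1) / n) :=
        mul_le_mul_of_nonneg_left (Real.rpow_le_rpow hc0 hcT he) (Real.rpow_nonneg hc0 _)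
  have amgm : c ^ ((1 : ℝ) / n) ≤ ∑ j, (1 / (n : ℝ)) * a j := by
    calc c ^ ((1 : ℝ) / n) ≤ (∏ j, a j) ^ ((1 : ℝ) / n) :=
          Real.rpow_le_rpow hc0 hca (by positivity)
    _ = ∏ j, (a j) ^ ((1 : ℝ) / n) :=
          (Real.finset_prod_rpow _ _ (fun j _ => ha j) _).symm
    _ ≤ ∑ j, (1 / (n : ℝ)) * a j := by
          refine Real.geom_mean_le_arith_mean_weighted _ _ _
            (fun i _ => by positivity) ?_ (fun i _ => ha i)
          simp only [Finset.sum_const, Finset.card_univ, Fintype.card_fin, nsmul_eq_mul]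
          field_simp
  rw [div_le_iff₀ hTe]
  have h2 : c ≤ (∑ j, (1 / (n : ℝ)) * a j) * T ^ (((n : ℝ) - 1) / n) := by
    calc c ≤ c ^ ((1 : ℝ) / n) * T ^ (((n : ℝ) - 1) / n) := key
    _ ≤ (∑ j, (1 / (n : ℝ)) * a j) * T ^ (((n : ℝ) - 1) / n) := by gcongr
  have h3 : (∑ j, (1 / (n : ℝ)) * a j) = (1 / (n : ℝ)) * ∑ j, a j := by
    rw [Finset.mul_sum]
  rw [h3] at h2
  calc (n : ℝ) * c ≤ (n : ℝ) * ((1 / (n : ℝ)) * (∑ j, a j) * T ^ (((n : ℝ) - 1) / n)) := by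
        apply mul_le_mul_of_nonneg_left _ hn'.le
        exact h2
  _ = (∑ j, a j) * T ^ (((n : ℝ) - 1) / n) := by field_simp

/-- `phiTen` is injective on a set with constant last coordinate. -/
lemma injOn_phiTen (N : ℕ) (r : ℤ) (G : Finset (Fin (N + 1) → ℤ))
    (hG : ∀ x ∈ G, x (Fin.last N) = r) : Set.InjOn (phiTen N) G := by
  intro x hx y hy hxy
  funext i
  refine Fin.lastCases ?_ ?_ i
  · rw [hG x hx, hG y hy]
  · intro k
    exact congrFun hxy k

/-- Box bound for a fiber. -/
lemma fiber_box (N : ℕ) (r : ℤ) (G : Finset (Fin (N + 1) → ℤ))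
    (hG : ∀ x ∈ G, x (Fin.last N) = r) :
    G.card ≤ ∏ j : Fin N, (G.image (fun x => x j.castSucc)).card := by
  have hsub : G.image (phiTen N) ⊆
      Fintype.piFinset (fun j : Fin N => G.image (fun x => x j.castSucc)) := by
    intro y hy
    rw [Finset.mem_image] at hy
    obtain ⟨x, hx, rfl⟩ := hy
    rw [Fintype.mem_piFinset]
    intro j
    exact Finset.mem_image_of_mem _ hx
  calc G.card = (G.image (phiTen N)).card :=
        (Finset.card_image_of_injOn (injOn_phiTen N r G hG)).symm
  _ ≤ (Fintype.piFinset (fun j : Fin N => G.image (fun x => x j.castSucc))).card :=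
        Finset.card_le_card hsub
  _ = ∏ j : Fin N, (G.image (fun x => x j.castSucc)).card := Fintype.card_piFinset _

/-- Fiber card is at most the tensor-projection card. -/
lemma fiber_le_ten (N : ℕ) (r : ℤ) (F : Finset (Fin (N + 1) → ℤ)) :
    (F.filter (fun x => x (Fin.last N) = r)).card ≤ (F.image (phiTen N)).card := by
  have hinj := injOn_phiTen N r (F.filter (fun x => x (Fin.last N) = r))
    (fun x hx => (Finset.mem_filter.mp hx).2)
  calc (F.filter (fun x => x (Fin.last N) = r)).card
      = ((F.filter (fun x => x (Fin.last N) = r)).image (phiTen N)).card :=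
        (Finset.card_image_of_injOn hinj).symm
  _ ≤ (F.image (phiTen N)).card :=
        Finset.card_le_card (Finset.image_subset_image (Finset.filter_subset _ _))

/-- Sum over fibers of the 1-D projections is at most the matrix-projection card. -/
lemma proj_sum (N : ℕ) (F : Finset (Fin (N + 1) → ℤ)) (j : Fin N) :
    ∑ r ∈ F.image (fun x => x (Fin.last N)),
      ((F.filter (fun x => x (Fin.last N) = r)).image (fun x => x j.castSucc)).card
      ≤ (F.image (phiMat N j)).card := by
  have hdecomp : (F.image (phiMat N j)).card
      = ∑ r ∈ F.image (fun x => x (Fin.last N)),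
          ((F.image (phiMat N j)).filter (fun p => p.2 = r)).card := by
    apply Finset.card_eq_sum_card_fiberwise
    intro p hp
    rw [Finset.mem_coe, Finset.mem_image] at hp
    obtain ⟨x, hx, rfl⟩ := hp
    exact Finset.mem_image_of_mem _ hx
  rw [hdecomp]
  apply Finset.sum_le_sum
  intro r _
  have him : (F.filter (fun x => x (Fin.last N) = r)).image (fun x => x j.castSucc)
      = ((F.filter (fun x => x (Fin.last N) = r)).image (phiMat N j)).image Prod.fst := by
    rw [Finset.image_image]
    apply Finset.image_congr
    intro x _
    rfl
  have hsub : (F.filter (fun x => x (Fin.last N) = r)).image (phiMat N j)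
      ⊆ (F.image (phiMat N j)).filter (fun p => p.2 = r) := by
    intro p hp
    rw [Finset.mem_image] at hp
    obtain ⟨x, hx, rfl⟩ := hp
    rw [Finset.mem_filter] at hx ⊢
    exact ⟨Finset.mem_image_of_mem _ hx.1, hx.2⟩
  calc ((F.filter (fun x => x (Fin.last N) = r)).image (fun x => x j.castSucc)).card
      = (((F.filter (fun x => x (Fin.last N) = r)).image (phiMat N j)).image Prod.fst).card := by
        rw [him]
  _ ≤ ((F.filter (fun x => x (Fin.last N) = r)).image (phiMat N j)).card :=
        Finset.card_image_le
  _ ≤ ((F.image (phiMat N j)).filter (fun p => p.2 = r)).card :=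
        Finset.card_le_card hsub

/-- Rectangular case, sum form: if `|φ_{N+1}(F)| ≤ T` then
`∑_{j=1}^{N} |φ_j(F)| ≥ N|F| / T^{(N-1)/N}`. -/
theorem stmt_9 (N : ℕ) (hN : 2 ≤ N) (T : ℝ) (hT : 0 < T)
    (F : Finset (Fin (N + 1) → ℤ))
    (h : ((F.image (phiTen N)).card : ℝ) ≤ T) :
    (N : ℝ) * F.card / T ^ (((N : ℝ) - 1) / N)
      ≤ ∑ j : Fin N, ((F.image (phiMat N j)).card : ℝ) := by
  have hNpos : 0 < N := by omega
  have hcardF : F.card = ∑ r ∈ F.image (fun x => x (Fin.last N)),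
      (F.filter (fun x => x (Fin.last N) = r)).card := by
    apply Finset.card_eq_sum_card_fiberwise
    intro x hx
    exact Finset.mem_image_of_mem _ hx
  calc (N : ℝ) * F.card / T ^ (((N : ℝ) - 1) / N)
      = ∑ r ∈ F.image (fun x => x (Fin.last N)),
          (N : ℝ) * ((F.filter (fun x => x (Fin.last N) = r)).card : ℝ)
            / T ^ (((N : ℝ) - 1) / N) := by
        rw [hcardF]
        push_cast
        rw [Finset.mul_sum, Finset.sum_div]
  _ ≤ ∑ r ∈ F.image (fun x => x (Fin.last N)), ∑ j : Fin N,
        (((F.filter (fun x => x (Fin.last N) = r)).image (fun x => x j.castSucc)).card : ℝ) := by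
        apply Finset.sum_le_sum
        intro r hr
        apply aux_fiber N hNpos T hT _ _ (fun j => by positivity) (by positivity)
        · calc ((F.filter (fun x => x (Fin.last N) = r)).card : ℝ)
              ≤ ((F.image (phiTen N)).card : ℝ) := by exact_mod_cast fiber_le_ten N r F
          _ ≤ T := h
        · exact_mod_cast fiber_box N r (F.filter (fun x => x (Fin.last N) = r))
            (fun x hx => (Finset.mem_filter.mp hx).2)
  _ = ∑ j : Fin N, ∑ r ∈ F.image (fun x => x (Fin.last N)),
        (((F.filter (fun x => x (Fin.last N) = r)).image (fun x => x j.castSucc)).card : ℝ) :=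
        Finset.sum_comm
  _ ≤ ∑ j : Fin N, ((F.image (phiMat N j)).card : ℝ) := by
        apply Finset.sum_le_sum
        intro j _
        exact_mod_cast proj_sum N F j
end

section
/- Let N ≥ 2 be an integer, let α be a real number with 0 < α < 1, and let M be a real number with M ≥ (N·α^{1/N}/(1−α))^{N/(N−1)}. Then the integer b = ⌊(α·M)^{1/N}⌋ satisfies b^N + N·b ≤ M. -/
/-- Validity of the block size `b = ⌊(αM)^{1/N}⌋` for the sequential blocked MTTKRP
algorithm: if `M ≥ (Nα^{1/N}/(1-α))^{N/(N-1)}` then `b^N + Nb ≤ M`. -/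
theorem stmt_12 (N : ℕ) (hN : 2 ≤ N) (α : ℝ) (hα0 : 0 < α) (hα1 : α < 1)
    (M : ℝ)
    (hM : ((N : ℝ) * α ^ (1 / (N : ℝ)) / (1 - α)) ^ ((N : ℝ) / ((N : ℝ) - 1)) ≤ M) :
    (⌊(α * M) ^ (1 / (N : ℝ))⌋ : ℝ) ^ N
      + (N : ℝ) * (⌊(α * M) ^ (1 / (N : ℝ))⌋ : ℝ) ≤ M := by
  have hNr : (2:ℝ) ≤ (N:ℝ) := by exact_mod_cast hN
  have hNpos : (0:ℝ) < N := by linarith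
  have h1α : 0 < 1 - α := by linarith
  have hC : 0 < (N:ℝ) * α ^ (1/(N:ℝ)) / (1-α) := by positivity
  have hM0 : 0 < M := lt_of_lt_of_le (Real.rpow_pos_of_pos hC _) hM
  have hαM : 0 < α * M := by positivity
  set x := (α*M) ^ (1/(N:ℝ)) with hxdef
  have hx0 : 0 < x := Real.rpow_pos_of_pos hαM _
  have hb0 : (0:ℝ) ≤ (⌊x⌋:ℝ) := by exact_mod_cast Int.floor_nonneg.mpr hx0.le
  have hbx : (⌊x⌋:ℝ) ≤ x := Int.floor_le x
  have hxN : x ^ N = α * M := by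
    rw [hxdef, ← Real.rpow_natCast ((α*M) ^ (1/(N:ℝ))) N, ← Real.rpow_mul hαM.le,
      one_div_mul_cancel (ne_of_gt hNpos), Real.rpow_one]
  have h1 : (⌊x⌋:ℝ) ^ N ≤ α * M := by
    calc (⌊x⌋:ℝ)^N ≤ x^N := pow_le_pow_left₀ hb0 hbx N
    _ = α * M := hxN
  have h2 : (N:ℝ) * (⌊x⌋:ℝ) ≤ (1-α) * M := by
    have hMpow : (N:ℝ) * α ^ (1/(N:ℝ)) / (1-α) ≤ M ^ (((N:ℝ)-1)/(N:ℝ)) := by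
      have hN1 : (N:ℝ) - 1 ≠ 0 := by linarith
      have hNne : (N:ℝ) ≠ 0 := ne_of_gt hNpos
      have h := Real.rpow_le_rpow (Real.rpow_nonneg hC.le _) hM
        (div_nonneg (by linarith : (0:ℝ) ≤ (N:ℝ)-1) hNpos.le)
      have heq : (N:ℝ)/((N:ℝ)-1) * (((N:ℝ)-1)/(N:ℝ)) = 1 := by field_simp
      rwa [← Real.rpow_mul hC.le, heq, Real.rpow_one] at h
    have hsplit : x = α ^ (1/(N:ℝ)) * M ^ (1/(N:ℝ)) := by
      rw [hxdef, Real.mul_rpow hα0.le hM0.le]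
    have hMsplit : M ^ (((N:ℝ)-1)/(N:ℝ)) * M ^ (1/(N:ℝ)) = M := by
      rw [← Real.rpow_add hM0]
      have : ((N:ℝ)-1)/(N:ℝ) + 1/(N:ℝ) = 1 := by field_simp; ring
      rw [this, Real.rpow_one]
    calc (N:ℝ) * (⌊x⌋:ℝ) ≤ (N:ℝ) * x := by nlinarith
    _ = ((N:ℝ) * α ^ (1/(N:ℝ)) / (1-α)) * ((1-α) * M ^ (1/(N:ℝ))) := by
        rw [hsplit]; field_simp
    _ ≤ M ^ (((N:ℝ)-1)/(N:ℝ)) * ((1-α) * M ^ (1/(N:ℝ))) := by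
        apply mul_le_mul_of_nonneg_right hMpow; positivity
    _ = (1-α) * M := by rw [mul_comm (1-α), ← mul_assoc, hMsplit, mul_comm]
  linarith
end

section
/- Let N ≥ 1 be an integer, let γ be a real number with γ > 1 + 1/N, let b be a positive integer, and let I_1,…,I_N be positive integers such that b ≤ ((γ·N/(N+1))^{1/N} − 1)·I_k for every k ∈ {1,…,N}. Then ∏_{k=1}^{N} ⌈I_k/b⌉ ≤ γ·(N/(N+1))·(∏_{k=1}^{N} I_k)/b^N. -/
/-- Bound on the number of blocks: if `b ≤ ((γN/(N+1))^{1/N} - 1) I_k` for all `k`,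
then `∏_k ⌈I_k/b⌉ ≤ γ (N/(N+1)) (∏_k I_k)/b^N`. -/
theorem stmt_14 (N : ℕ) (hN : 1 ≤ N) (γ : ℝ) (hγ : 1 + 1 / (N : ℝ) < γ)
    (b : ℕ) (hb : 0 < b) (I : Fin N → ℕ) (hI : ∀ k, 0 < I k)
    (hbI : ∀ k, (b : ℝ) ≤ ((γ * N / ((N : ℝ) + 1)) ^ (1 / (N : ℝ)) - 1) * I k) :
    (∏ k, (⌈(I k : ℝ) / b⌉ : ℝ))
      ≤ γ * ((N : ℝ) / ((N : ℝ) + 1)) * (∏ k, (I k : ℝ)) / (b : ℝ) ^ N := by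
  have hN0 : (0:ℝ) < N := by exact_mod_cast hN
  have hb0 : (0:ℝ) < b := by exact_mod_cast hb
  set c : ℝ := γ * N / ((N:ℝ) + 1) with hc
  have hc1 : 1 < c := by
    rw [hc, lt_div_iff₀ (by linarith)]
    have h1 : (1 + 1/(N:ℝ)) * N < γ * N := mul_lt_mul_of_pos_right hγ hN0
    have h2 : (1 + 1/(N:ℝ)) * N = N + 1 := by field_simp
    linarith
  have hc0 : (0:ℝ) < c := by linarith
  have hcr : (1:ℝ) ≤ c ^ (1/(N:ℝ)) :=
    Real.one_le_rpow (le_of_lt hc1) (by positivity)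
  have key : ∀ k, (⌈(I k : ℝ) / b⌉ : ℝ) ≤ c ^ (1/(N:ℝ)) * I k / b := by
    intro k
    rw [le_div_iff₀ hb0]
    have h1 : (⌈(I k : ℝ) / b⌉ : ℝ) < (I k : ℝ)/b + 1 := Int.ceil_lt_add_one _
    have h2 := hbI k
    have h3 : ((I k : ℝ)/b) * b = I k := div_mul_cancel₀ _ (ne_of_gt hb0)
    nlinarith [hb0, h1, h3]
  have hceil0 : ∀ k ∈ Finset.univ, (0:ℝ) ≤ (⌈(I k : ℝ) / b⌉ : ℝ) := by
    intro k _
    have : (0:ℝ) ≤ (I k : ℝ)/b := by positivity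
    exact_mod_cast Int.ceil_nonneg this
  have hpow : (c ^ (1/(N:ℝ))) ^ N = c := by
    rw [← Real.rpow_natCast (c ^ (1/(N:ℝ))) N, ← Real.rpow_mul (le_of_lt hc0),
      one_div, inv_mul_cancel₀ (ne_of_gt hN0), Real.rpow_one]
  calc (∏ k, (⌈(I k : ℝ) / b⌉ : ℝ))
      ≤ ∏ k, c ^ (1/(N:ℝ)) * I k / b :=
        Finset.prod_le_prod hceil0 (fun k _ => key k)
    _ = (c ^ (1/(N:ℝ))) ^ N * (∏ k, (I k : ℝ)) / (b:ℝ) ^ N := by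
        rw [Finset.prod_div_distrib, Finset.prod_mul_distrib, Finset.prod_const,
          Finset.prod_const, Finset.card_fin]
    _ = γ * ((N : ℝ) / ((N : ℝ) + 1)) * (∏ k, (I k : ℝ)) / (b : ℝ) ^ N := by
        rw [hpow, hc]; ring
end
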